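/- For all width-k bit-vectors s and t, the literal (s udiv x) = t has the conditional inverse x = s udiv t: if there exists x with s udiv x = t, then s udiv (s udiv t) = t. -/

import Mathlib

def smtUdiv {k : ℕ} (s x : BitVec k) : BitVec k :=
  if x = 0 then BitVec.allOnes k else s / x

lemma nat_key (s x : ℕ) : s / (s / (s / x)) = s / x := by
  rcases Nat.eq_zero_or_pos (s / x) with h | h
  · simp [h]
  · have hx : 0 < x := by
      rcases Nat.eq_zero_or_pos x with rfl | hx
      · simp at h
      · exact hx
    set t := s / x with ht
    have hts : t ≤ s := Nat.div_le_self s x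
    have hq : 0 < s / t := Nat.div_pos hts h
    have hxq : x ≤ s / t := by
      rw [Nat.le_div_iff_mul_le h]
      calc x * t = t * x := Nat.mul_comm _ _
        _ ≤ s := by rw [ht]; exact Nat.div_mul_le_self s x
    have h1 : t ≤ s / (s / t) := by
      rw [Nat.le_div_iff_mul_le hq]
      calc t * (s / t) = s / t * t := Nat.mul_comm _ _
        _ ≤ s := Nat.div_mul_le_self s t
    have h2 : s / (s / t) < t + 1 := by
      rw [Nat.div_lt_iff_lt_mul hq]
      have hm : s % x < x := Nat.mod_lt _ hx
      have hd : x * (s / x) + s % x = s := Nat.div_add_mod s x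
      calc s = x * t + s % x := by rw [← ht] at hd; omega
        _ < (t + 1) * x := by
            have hr : (t + 1) * x = x * t + x := by ring
            omega
        _ ≤ (t + 1) * (s / t) := Nat.mul_le_mul_left _ hxq
    omega

theorem udiv_conditional_inverse (k : ℕ) (s t : BitVec k)
    (h : ∃ x : BitVec k, smtUdiv s x = t) :
    smtUdiv s (smtUdiv s t) = t := by
  obtain ⟨x, hx⟩ := h
  rcases Nat.eq_zero_or_pos k with rfl | hk
  · apply BitVec.eq_of_toNat_eq
    have h1 := (smtUdiv s (smtUdiv s t)).isLt
    have h2 := t.isLt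
    simp at h1 h2
    omega
  · have hn : 2 ≤ 2 ^ k := by
      calc 2 = 2 ^ 1 := rfl
      _ ≤ 2 ^ k := Nat.pow_le_pow_right (by norm_num) hk
    have hS := s.isLt
    have hT := t.isLt
    have hX := x.isLt
    by_cases ht0 : t = 0
    · subst ht0
      have hx0 : x ≠ 0 := by
        intro h0
        rw [h0] at hx
        simp only [smtUdiv, if_pos rfl] at hx
        have := congrArg BitVec.toNat hx
        simp [BitVec.toNat_allOnes] at this
        omega
      simp only [smtUdiv, if_neg hx0] at hx
      have hST : s.toNat / x.toNat = 0 := by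
        have := congrArg BitVec.toNat hx
        simpa [BitVec.toNat_udiv] using this
      have hxpos : 0 < x.toNat := by
        rcases Nat.eq_zero_or_pos x.toNat with h0 | h0
        · exact absurd (BitVec.eq_of_toNat_eq (by simpa using h0)) hx0
        · exact h0
      have hSX : s.toNat < x.toNat := (Nat.div_eq_zero_iff.1 hST).resolve_left (by omega)
      have hall : (BitVec.allOnes k : BitVec k) ≠ 0 := by
        intro h0
        have := congrArg BitVec.toNat h0
        simp [BitVec.toNat_allOnes] at this
        omega
      rw [show smtUdiv s 0 = BitVec.allOnes k from by simp [smtUdiv],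
        show smtUdiv s (BitVec.allOnes k) = s / BitVec.allOnes k from by rw [smtUdiv, if_neg hall]]
      apply BitVec.eq_of_toNat_eq
      have hlt : s.toNat < 2 ^ k - 1 := by omega
      simp [BitVec.toNat_udiv, BitVec.toNat_allOnes, Nat.div_eq_of_lt hlt]
    · have hTpos : 0 < t.toNat := by
        rcases Nat.eq_zero_or_pos t.toNat with h0 | h0
        · exact absurd (BitVec.eq_of_toNat_eq (by simpa using h0)) ht0
        · exact h0
      simp only [smtUdiv, if_neg ht0]
      by_cases hst0 : s / t = 0
      · rw [hst0]
        simp only [smtUdiv, if_pos rfl]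
        have hSTlt : s.toNat < t.toNat := by
          have := congrArg BitVec.toNat hst0
          simp [BitVec.toNat_udiv] at this
          exact this.resolve_left (by omega)
        by_cases hx0 : x = 0
        · rw [hx0] at hx
          simpa [smtUdiv] using hx
        · exfalso
          simp only [smtUdiv, if_neg hx0] at hx
          have hxv : s.toNat / x.toNat = t.toNat := by
            have := congrArg BitVec.toNat hx
            simpa [BitVec.toNat_udiv] using this
          have hle : s.toNat / x.toNat ≤ s.toNat := Nat.div_le_self _ _
          omega
      · simp only [smtUdiv, if_neg hst0]
        apply BitVec.eq_of_toNat_eq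
        simp only [BitVec.toNat_udiv]
        by_cases hx0 : x = 0
        · rw [hx0] at hx
          simp only [smtUdiv, if_pos rfl] at hx
          have hTval : t.toNat = 2 ^ k - 1 := by
            have := congrArg BitVec.toNat hx
            simpa [BitVec.toNat_allOnes] using this.symm
          have hSge : t.toNat ≤ s.toNat := by
            by_contra hlt
            push_neg at hlt
            apply hst0
            apply BitVec.eq_of_toNat_eq
            simp [BitVec.toNat_udiv, Nat.div_eq_of_lt hlt]
          have hSeq : s.toNat = t.toNat := by omega
          rw [hSeq, Nat.div_self hTpos, Nat.div_one]
        · simp only [smtUdiv, if_neg hx0] at hx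
          have hxv : s.toNat / x.toNat = t.toNat := by
            have := congrArg BitVec.toNat hx
            simpa [BitVec.toNat_udiv] using this
          rw [← hxv]
          exact nat_key s.toNat x.toNat
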